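/- Let U₂ : ℝ → ℝ satisfy X = -U₂(X) - U₂(X)^5. Then as X → +∞, U₂(X) = -X^(1/5) + (1/5) X^(-3/5) + O(X^(-7/5)); more precisely, there exist C, X₀ > 0 such that |U₂(X) + X^(1/5) - (1/5) X^(-3/5)| ≤ C X^(-7/5) for all X ≥ X₀. -/
import Mathlib

private lemma stmt8_mono (s t : ℝ) (h : s + s^5 ≤ t + t^5) : s ≤ t := by
  by_contra hc
  push_neg at hc
  nlinarith [sq_nonneg (s+t), sq_nonneg (s-t), sq_nonneg (s^2+t^2), sq_nonneg (s^2-t^2),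
    sq_nonneg (s*t), sq_nonneg (s^2 + s*t), sq_nonneg (t^2 + s*t)]

private lemma stmt8_pows (z : ℝ) (hz : 0 < z) (hz2 : z ≤ 1/2) :
    z^4 ≤ 1/16 ∧ z^8 ≤ 1/16 ∧ z^12 ≤ 1/16 ∧ z^16 ≤ 1/16 ∧ z^20 ≤ 1/16 ∧
      z^24 ≤ 1/16 ∧ z^28 ≤ 1/16 ∧ z^32 ≤ 1/16 := by
  refine ⟨?_, ?_, ?_, ?_, ?_, ?_, ?_, ?_⟩ <;>
  · calc _ ≤ (1/2:ℝ) ^ _ := pow_le_pow_left₀ hz.le hz2 _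
      _ ≤ 1/16 := by norm_num

private lemma stmt8_low (z : ℝ) (hz : 0 < z) (hz2 : z ≤ 1/2) :
    (1/z - z^3/5 - z^7) + (1/z - z^3/5 - z^7)^5 ≤ (1/z)^5 := by
  obtain ⟨h4, h8, h12, h16, h20, h24, h28, h32⟩ := stmt8_pows z hz hz2
  have hQ : (-24/5 : ℝ) + 73/25*z^4 + 1101/125*z^8 - 18251/3125*z^12 - 1101/125*z^16
      + 98/25*z^20 + 23/5*z^24 - z^28 - z^32 ≤ 0 := by
    nlinarith [pow_nonneg hz.le 12, pow_nonneg hz.le 16, pow_nonneg hz.le 28,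
      pow_nonneg hz.le 32]
  have hzne : z ≠ 0 := hz.ne'
  have hfac : (1/z - z^3/5 - z^7) + (1/z - z^3/5 - z^7)^5 - (1/z)^5
      = z^3 * ((-24/5 : ℝ) + 73/25*z^4 + 1101/125*z^8 - 18251/3125*z^12 - 1101/125*z^16
      + 98/25*z^20 + 23/5*z^24 - z^28 - z^32) := by
    field_simp
    ring
  nlinarith [mul_nonpos_of_nonneg_of_nonpos (by positivity : (0:ℝ) ≤ z^3) hQ]

private lemma stmt8_high (z : ℝ) (hz : 0 < z) (hz2 : z ≤ 1/2) :
    (1/z)^5 ≤ (1/z - z^3/5 + z^7) + (1/z - z^3/5 + z^7)^5 := by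
  obtain ⟨h4, h8, h12, h16, h20, h24, h28, h32⟩ := stmt8_pows z hz hz2
  have hQ : (0:ℝ) ≤ (26/5 : ℝ) - 77/25*z^4 + 1401/125*z^8 - 19251/3125*z^12 + 1401/125*z^16
      - 102/25*z^20 + 27/5*z^24 - z^28 + z^32 := by
    nlinarith [pow_nonneg hz.le 8, pow_nonneg hz.le 16, pow_nonneg hz.le 24,
      pow_nonneg hz.le 32]
  have hzne : z ≠ 0 := hz.ne'
  have hfac : (1/z - z^3/5 + z^7) + (1/z - z^3/5 + z^7)^5 - (1/z)^5
      = z^3 * ((26/5 : ℝ) - 77/25*z^4 + 1401/125*z^8 - 19251/3125*z^12 + 1401/125*z^16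
      - 102/25*z^20 + 27/5*z^24 - z^28 + z^32) := by
    field_simp
    ring
  nlinarith [mul_nonneg (by positivity : (0:ℝ) ≤ z^3) hQ]

/-- If `X = -U₂ X - (U₂ X)^5` for all `X`, then as `X → +∞`,
`U₂ X = -X^(1/5) + (1/5) X^(-3/5) + O(X^(-7/5))`: there exist `C, X₀ > 0` with
`|U₂ X + X^(1/5) - (1/5) X^(-3/5)| ≤ C X^(-7/5)` for all `X ≥ X₀`. -/
theorem stmt_8 (U₂ : ℝ → ℝ)
    (himp : ∀ X : ℝ, X = -U₂ X - (U₂ X) ^ 5) :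
    ∃ C X₀ : ℝ, 0 < C ∧ 0 < X₀ ∧
      ∀ X : ℝ, X₀ ≤ X →
        |U₂ X + X ^ ((1 : ℝ) / 5) - (1 / 5) * X ^ (-(3 : ℝ) / 5)| ≤
          C * X ^ (-(7 : ℝ) / 5) := by
  refine ⟨1, 32, one_pos, by norm_num, fun X hX32 => ?_⟩
  have hX : (0:ℝ) < X := by linarith
  set y : ℝ := X ^ ((1:ℝ)/5) with hy_def
  have hy : 0 < y := Real.rpow_pos_of_pos hX _
  -- y ≥ 2
  have h32 : (32:ℝ) ^ ((1:ℝ)/5) = 2 := by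
    have h2 : (32:ℝ) = (2:ℝ) ^ (5:ℝ) := by
      rw [show (5:ℝ) = ((5:ℕ):ℝ) by norm_num, Real.rpow_natCast]; norm_num
    rw [h2, ← Real.rpow_mul (by norm_num)]
    norm_num
  have hy2 : 2 ≤ y := by
    rw [← h32]
    exact Real.rpow_le_rpow (by norm_num) hX32 (by norm_num)
  set z : ℝ := y⁻¹ with hz_def
  have hz : 0 < z := inv_pos.mpr hy
  have hz2 : z ≤ 1/2 := by
    rw [hz_def]
    rw [inv_le_comm₀ (by positivity) (by norm_num)]
    simpa using hy2
  have hzy : 1/z = y := by rw [hz_def, one_div, inv_inv]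
  -- powers of X as powers of z
  have hy5 : y ^ 5 = X := by
    rw [show y ^ 5 = y ^ (5:ℕ) from rfl, ← Real.rpow_natCast y 5, hy_def,
      ← Real.rpow_mul hX.le]
    norm_num
  have h3 : X ^ (-(3:ℝ)/5) = z ^ 3 := by
    rw [show (-(3:ℝ)/5) = (1/5) * (-(3:ℕ):ℝ) by norm_num, Real.rpow_mul hX.le,
      Real.rpow_neg (Real.rpow_nonneg hX.le _), Real.rpow_natCast, hz_def, ← inv_pow]
  have h7 : X ^ (-(7:ℝ)/5) = z ^ 7 := by
    rw [show (-(7:ℝ)/5) = (1/5) * (-(7:ℕ):ℝ) by norm_num, Real.rpow_mul hX.le,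
      Real.rpow_neg (Real.rpow_nonneg hX.le _), Real.rpow_natCast, hz_def, ← inv_pow]
  -- v = -U₂ X satisfies v + v^5 = X
  set v : ℝ := -U₂ X with hv_def
  have hv : v + v ^ 5 = X := by
    have h := himp X
    rw [hv_def]; linear_combination -h
  -- sandwich
  have hlow := stmt8_low z hz hz2
  have hhigh := stmt8_high z hz hz2
  rw [hzy] at hlow hhigh
  rw [← hy5] at hv
  have ha : y - z^3/5 - z^7 ≤ v := by
    apply stmt8_mono
    calc (y - z^3/5 - z^7) + (y - z^3/5 - z^7)^5 ≤ y^5 := hlow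
      _ = v + v^5 := hv.symm
  have hb : v ≤ y - z^3/5 + z^7 := by
    apply stmt8_mono
    calc v + v^5 = y^5 := hv
      _ ≤ (y - z^3/5 + z^7) + (y - z^3/5 + z^7)^5 := hhigh
  rw [h3, h7, one_mul]
  rw [abs_le]
  constructor
  · have : U₂ X = -v := by rw [hv_def]; ring
    rw [this]; linarith
  · have : U₂ X = -v := by rw [hv_def]; ring
    rw [this]; linarith
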